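/- Let λ ∈ Λ_n and D(λ) = {(a_i,b_i)} as above. Then for any p ∈ ℕ with {j : (p,j) ∈ D(λ)} nonempty, #{j : (p+1,j) ∈ D(λ)} + #{j : (p,j) ∈ D(λ)} ≥ max{j : (p,j) ∈ D(λ)} + 1; and if {j : (p,j) ∈ D(λ)} is empty then no element (x,y) ∈ D(λ) has x ≥ p. -/

import Mathlib

def IsLambda (n : ℕ) (l : Fin n → ℕ) : Prop :=
  (∀ i j : Fin n, i ≤ j → l j ≤ l i) ∧
  (∀ i : Fin n, l i + i.val ≤ n - 1) ∧
  (∀ i : Fin n, i.val = n - 1 → l i = 0)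

def aseq (n : ℕ) (l : Fin n → ℕ) (i : Fin n) : ℕ := n - 1 - i.val - l i

def bseq (n : ℕ) (l : Fin n → ℕ) (i : Fin n) : ℕ :=
  (Finset.univ.filter (fun j : Fin n => i < j ∧
    (l i + i.val = l j + j.val ∨ l i + i.val = l j + j.val + 1))).card

def Dof (n : ℕ) (l : Fin n → ℕ) : Finset (ℕ × ℕ) :=
  Finset.image (fun i => (aseq n l i, bseq n l i)) Finset.univ

/-- The `p`-th column of `D`. -/
def col (D : Finset (ℕ × ℕ)) (p : ℕ) : Finset (ℕ × ℕ) :=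
  D.filter (fun q => q.1 = p)

private lemma key_count (n : ℕ) (l : Fin n → ℕ) (hl : IsLambda n l) (p : ℕ)
    (i : Fin n) (hi : aseq n l i = p) :
    bseq n l i + 1 ≤ (Finset.univ.filter (fun j : Fin n => aseq n l j = p + 1)).card
      + (Finset.univ.filter (fun j : Fin n => aseq n l j = p)).card := by
  obtain ⟨hmono, hbound, hlast⟩ := hl
  set T := Finset.univ.filter (fun j : Fin n => i < j ∧
    (l i + i.val = l j + j.val ∨ l i + i.val = l j + j.val + 1)) with hT
  have hnot : i ∉ T := by simp [hT]
  have hsub : insert i T ⊆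
      (Finset.univ.filter (fun j : Fin n => aseq n l j = p + 1))
        ∪ (Finset.univ.filter (fun j : Fin n => aseq n l j = p)) := by
    intro k hk
    simp only [hT, Finset.mem_insert, Finset.mem_filter, Finset.mem_union,
      Finset.mem_univ, true_and] at hk ⊢
    rcases hk with rfl | ⟨_, h⟩
    · right; exact hi
    · have h1 := hbound i
      have h2 := hbound k
      simp only [aseq] at hi ⊢
      omega
  calc bseq n l i + 1 = (insert i T).card := (Finset.card_insert_of_notMem hnot).symm
    _ ≤ ((Finset.univ.filter (fun j : Fin n => aseq n l j = p + 1))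
        ∪ (Finset.univ.filter (fun j : Fin n => aseq n l j = p))).card :=
      Finset.card_le_card hsub
    _ ≤ _ := Finset.card_union_le _ _

private lemma b_strict (n : ℕ) (l : Fin n → ℕ) (hl : IsLambda n l)
    (i j : Fin n) (hij : i < j) (hE : aseq n l i = aseq n l j) :
    bseq n l j < bseq n l i := by
  obtain ⟨hmono, hbound, hlast⟩ := hl
  have hc : l i + i.val = l j + j.val := by
    have h1 := hbound i
    have h2 := hbound j
    simp only [aseq] at hE
    omega
  unfold bseq
  apply Finset.card_lt_card
  have hsub : Finset.univ.filter (fun k : Fin n => j < k ∧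
      (l j + j.val = l k + k.val ∨ l j + j.val = l k + k.val + 1)) ⊆
      Finset.univ.filter (fun k : Fin n => i < k ∧
      (l i + i.val = l k + k.val ∨ l i + i.val = l k + k.val + 1)) := by
    intro k hk
    simp only [Finset.mem_filter, Finset.mem_univ, true_and] at hk ⊢
    exact ⟨lt_trans hij hk.1, by omega⟩
  refine (Finset.ssubset_iff_of_subset hsub).2 ⟨j, ?_, ?_⟩
  · simp only [Finset.mem_filter, Finset.mem_univ, true_and]
    exact ⟨hij, Or.inl hc⟩
  · simp

private lemma col_eq (n : ℕ) (l : Fin n → ℕ) (p : ℕ) :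
    col (Dof n l) p = (Finset.univ.filter (fun i : Fin n => aseq n l i = p)).image
      (fun i => (aseq n l i, bseq n l i)) := by
  ext q
  simp only [col, Dof, Finset.mem_filter, Finset.mem_image, Finset.mem_univ, true_and]
  constructor
  · rintro ⟨⟨i, rfl⟩, hq⟩
    exact ⟨i, hq, rfl⟩
  · rintro ⟨i, hi, rfl⟩
    exact ⟨⟨i, rfl⟩, hi⟩

private lemma col_card (n : ℕ) (l : Fin n → ℕ) (hl : IsLambda n l) (p : ℕ) :
    (col (Dof n l) p).card
      = (Finset.univ.filter (fun i : Fin n => aseq n l i = p)).card := by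
  rw [col_eq]
  apply Finset.card_image_of_injOn
  intro i hi j hj hfij
  simp only [Finset.mem_coe, Finset.mem_filter, Finset.mem_univ, true_and] at hi hj
  have hE : aseq n l i = aseq n l j := by rw [hi, hj]
  by_contra hne
  rcases lt_or_gt_of_ne (fun h => hne h) with h | h
  · have := b_strict n l hl i j h hE
    have : bseq n l i = bseq n l j := congrArg Prod.snd hfij
    omega
  · have := b_strict n l hl j i h hE.symm
    have : bseq n l i = bseq n l j := congrArg Prod.snd hfij
    omega

private lemma ivt (n : ℕ) (l : Fin n → ℕ) (hl : IsLambda n l) (p : ℕ)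
    (i : Fin n) (hp : p ≤ aseq n l i) : ∃ j : Fin n, aseq n l j = p := by
  obtain ⟨hmono, hbound, hlast⟩ := hl
  suffices h : ∀ m : ℕ, ∀ i : Fin n, n - 1 - i.val ≤ m → p ≤ aseq n l i →
      ∃ j : Fin n, aseq n l j = p from h (n - 1 - i.val) i le_rfl hp
  intro m
  induction m with
  | zero =>
    intro i him hp
    have hiv : i.val = n - 1 := by have := i.isLt; omega
    have hli := hlast i hiv
    refine ⟨i, ?_⟩
    simp only [aseq, hli, hiv] at hp ⊢
    omega
  | succ m ih =>
    intro i him hp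
    by_cases h : aseq n l i = p
    · exact ⟨i, h⟩
    · have hlt : p < aseq n l i := lt_of_le_of_ne hp (Ne.symm h)
      have hi1 : i.val + 1 < n := by
        by_contra hcon
        have hiv : i.val = n - 1 := by have := i.isLt; omega
        have hli := hlast i hiv
        simp only [aseq, hli, hiv] at hlt
        omega
      have hv : (⟨i.val + 1, hi1⟩ : Fin n).val = i.val + 1 := rfl
      have hm : l ⟨i.val + 1, hi1⟩ ≤ l i :=
        hmono i ⟨i.val + 1, hi1⟩ (by rw [Fin.le_def, hv]; omega)
      have h1 := hbound i
      have h2 := hbound (⟨i.val + 1, hi1⟩ : Fin n)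
      refine ih ⟨i.val + 1, hi1⟩ (by omega) ?_
      simp only [aseq] at hlt ⊢
      omega

theorem stmt4 (n : ℕ) (l : Fin n → ℕ) (hl : IsLambda n l) (p : ℕ) :
    ((col (Dof n l) p).Nonempty →
      ((col (Dof n l) p).image Prod.snd).sup id + 1 ≤
        (col (Dof n l) (p + 1)).card + (col (Dof n l) p).card) ∧
    (col (Dof n l) p = ∅ → ∀ q ∈ Dof n l, q.1 < p) := by
  constructor
  · intro hne
    have hpos : 0 < (col (Dof n l) p).card := Finset.card_pos.mpr hne
    have hX : 0 < (col (Dof n l) (p + 1)).card + (col (Dof n l) p).card := by omega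
    rw [Nat.add_one_le_iff]
    rw [Finset.sup_lt_iff hX]
    intro b hb
    simp only [Finset.mem_image] at hb
    obtain ⟨q, hq, rfl⟩ := hb
    simp only [col, Dof, Finset.mem_filter, Finset.mem_image, Finset.mem_univ, true_and] at hq
    obtain ⟨⟨i, rfl⟩, hq1⟩ := hq
    have hkey := key_count n l hl p i hq1
    rw [col_card n l hl, col_card n l hl]
    simpa [id] using hkey
  · intro hemp q hq
    by_contra hcon
    push_neg at hcon
    simp only [Dof, Finset.mem_image, Finset.mem_univ, true_and] at hq
    obtain ⟨i, rfl⟩ := hq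
    obtain ⟨j, hj⟩ := ivt n l hl p i hcon
    have : (aseq n l j, bseq n l j) ∈ col (Dof n l) p := by
      simp only [col, Dof, Finset.mem_filter, Finset.mem_image, Finset.mem_univ, true_and]
      exact ⟨⟨j, rfl⟩, hj⟩
    rw [hemp] at this
    exact absurd this (Finset.notMem_empty _)
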